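/- Let d, M ≥ 1, let ψ₁, …, ψ_M be vectors in ℂ^d (not necessarily of unit norm) such that the matrix I − Σ_{j=1}^M ψ_j ψ_j† is positive semidefinite, let n₁, …, n_M be natural numbers with N := Σ_j n_j > 0, and set f_j := n_j / N. Then for every unit vector φ ∈ ℂ^d one has ∏_{j=1}^M |⟨φ, ψ_j⟩|^{2 n_j} ≤ ∏_{j=1}^M f_j^{n_j}. -/

import Mathlib

open scoped BigOperators ComplexOrder
open Matrix

/-- The standard Hermitian inner product on `ℂ^d`, conjugate-linear in the
first argument: `⟨φ, ψ⟩ = ∑ i, conj (φ i) * ψ i`. -/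
noncomputable def inp {d : ℕ} (φ ψ : Fin d → ℂ) : ℂ :=
  ∑ i, (starRingEnd ℂ) (φ i) * ψ i

/-- Constrained AM–GM: if `a j ≥ 0` sum to at most `1`, then
`∏ a j ^ n j ≤ ∏ (n j / N) ^ n j` where `N = ∑ n j`. -/
lemma key_amgm (M N : ℕ) (hNpos : 0 < N) (n : Fin M → ℕ) (hN : N = ∑ j, n j)
    (a : Fin M → ℝ) (ha : ∀ j, 0 ≤ a j) (hle : ∑ j, a j ≤ 1) :
    ∏ j, a j ^ n j ≤ ∏ j, ((n j : ℝ) / N) ^ n j := by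
  set w : Fin M → ℝ := fun j => (n j : ℝ) / N with hw_def
  have hNR : (0:ℝ) < N := by exact_mod_cast hNpos
  have hw : ∀ j, 0 ≤ w j := fun j => div_nonneg (Nat.cast_nonneg _) hNR.le
  have hw' : ∑ j, w j = 1 := by
    simp only [hw_def]
    rw [← Finset.sum_div]
    rw [show ∑ j, (n j : ℝ) = (N : ℝ) by rw [hN]; push_cast; ring]
    field_simp
  set z : Fin M → ℝ := fun j => a j / w j with hz_def
  have hz : ∀ j, 0 ≤ z j := fun j => div_nonneg (ha j) (hw j)
  have hgm := Real.geom_mean_le_arith_mean_weighted Finset.univ w z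
    (fun i _ => hw i) hw' (fun i _ => hz i)
  have hsum : ∑ j, w j * z j ≤ 1 := by
    refine le_trans (Finset.sum_le_sum (fun j _ => ?_)) hle
    by_cases h : w j = 0
    · simp [h]; exact ha j
    · rw [hz_def]; rw [mul_div_cancel₀ _ h]
  have hzw1 : ∏ j, z j ^ w j ≤ 1 := hgm.trans hsum
  have hfact : ∀ j, a j ^ w j = z j ^ w j * w j ^ w j := by
    intro j
    by_cases h : w j = 0
    · simp [h]
    · have : a j = z j * w j := by rw [hz_def, div_mul_cancel₀ _ h]
      rw [this, Real.mul_rpow (hz j) (hw j)]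
  have hmain : ∏ j, a j ^ w j ≤ ∏ j, w j ^ w j := by
    calc ∏ j, a j ^ w j = (∏ j, z j ^ w j) * ∏ j, w j ^ w j := by
          rw [← Finset.prod_mul_distrib]; exact Finset.prod_congr rfl fun j _ => hfact j
      _ ≤ 1 * ∏ j, w j ^ w j := by
          apply mul_le_mul_of_nonneg_right hzw1
          exact Finset.prod_nonneg fun j _ => Real.rpow_nonneg (hw j) _
      _ = ∏ j, w j ^ w j := one_mul _
  have hpowa : ∀ (x : ℝ), 0 ≤ x → ∀ j, x ^ n j = (x ^ w j) ^ N := by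
    intro x hx j
    rw [← Real.rpow_natCast (x ^ w j) N, ← Real.rpow_mul hx, hw_def]
    rw [div_mul_cancel₀ _ (ne_of_gt hNR), Real.rpow_natCast]
  calc ∏ j, a j ^ n j = (∏ j, a j ^ w j) ^ N := by
        rw [← Finset.prod_pow]; exact Finset.prod_congr rfl fun j _ => hpowa _ (ha j) j
    _ ≤ (∏ j, w j ^ w j) ^ N :=
        pow_le_pow_left₀ (Finset.prod_nonneg fun j _ => Real.rpow_nonneg (ha j) _) hmain N
    _ = ∏ j, w j ^ n j := by
        rw [← Finset.prod_pow]; exact Finset.prod_congr rfl fun j _ => (hpowa _ (hw j) j).symm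

theorem stmt0 (d M : ℕ) (hd : 1 ≤ d) (hM : 1 ≤ M)
    (ψ : Fin M → (Fin d → ℂ))
    (hPOVM : Matrix.PosSemidef
      ((1 : Matrix (Fin d) (Fin d) ℂ) - ∑ j, Matrix.vecMulVec (ψ j) (star (ψ j))))
    (n : Fin M → ℕ) (N : ℕ) (hN : N = ∑ j, n j) (hNpos : 0 < N)
    (f : Fin M → ℝ) (hf : ∀ j, f j = (n j : ℝ) / N)
    (φ : Fin d → ℂ) (hφ : inp φ φ = 1) :
    ∏ j, ‖inp φ (ψ j)‖ ^ (2 * n j) ≤ ∏ j, (f j) ^ (n j) := by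
  classical
  set a : Fin M → ℝ := fun j => ‖inp φ (ψ j)‖ ^ 2 with ha_def
  have ha : ∀ j, 0 ≤ a j := fun j => sq_nonneg _
  have hquad := hPOVM.dotProduct_mulVec_nonneg φ
  have hexp : dotProduct (star φ)
      ((((1 : Matrix (Fin d) (Fin d) ℂ) - ∑ j, Matrix.vecMulVec (ψ j) (star (ψ j)))) *ᵥ φ)
      = 1 - ∑ j, (Complex.normSq (inp φ (ψ j)) : ℂ) := by
    have h1 : dotProduct (star φ) φ = (1 : ℂ) := by
      rw [← hφ]; simp [inp, dotProduct, Pi.star_apply, mul_comm]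
    have hsplit : (∑ j, Matrix.vecMulVec (ψ j) (star (ψ j))) *ᵥ φ
        = ∑ j, (Matrix.vecMulVec (ψ j) (star (ψ j))) *ᵥ φ := by
      ext i
      simp only [Matrix.mulVec, dotProduct, Matrix.sum_apply, Finset.sum_apply,
        Finset.sum_mul]
      exact Finset.sum_comm
    have hdot : dotProduct (star φ) (∑ j, (Matrix.vecMulVec (ψ j) (star (ψ j))) *ᵥ φ)
        = ∑ j, dotProduct (star φ) ((Matrix.vecMulVec (ψ j) (star (ψ j))) *ᵥ φ) := by
      simp only [dotProduct, Finset.sum_apply, Finset.mul_sum]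
      exact Finset.sum_comm
    have h2 : dotProduct (star φ) ((∑ j, Matrix.vecMulVec (ψ j) (star (ψ j))) *ᵥ φ)
        = ∑ j, (Complex.normSq (inp φ (ψ j)) : ℂ) := by
      rw [hsplit, hdot]
      apply Finset.sum_congr rfl
      intro j _
      rw [← Complex.mul_conj (inp φ (ψ j))]
      simp only [Matrix.mulVec, Matrix.vecMulVec_apply, dotProduct, inp,
        Pi.star_apply, map_sum, Finset.mul_sum, Finset.sum_mul]
      rw [Finset.sum_comm]
      apply Finset.sum_congr rfl; intro i _
      apply Finset.sum_congr rfl; intro k _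
      simp only [RCLike.star_def, _root_.map_mul, Complex.conj_conj]
      ring
    rw [Matrix.sub_mulVec, Matrix.one_mulVec, dotProduct_sub, h1, h2]
  rw [hexp] at hquad
  have hcast : (1 : ℂ) - ∑ j, (Complex.normSq (inp φ (ψ j)) : ℂ)
      = ((1 - ∑ j, Complex.normSq (inp φ (ψ j)) : ℝ) : ℂ) := by push_cast; ring
  rw [hcast] at hquad
  have hle' : (0:ℝ) ≤ 1 - ∑ j, Complex.normSq (inp φ (ψ j)) := by
    exact_mod_cast hquad
  have hle : ∑ j, a j ≤ 1 := by
    have : ∑ j, a j = ∑ j, Complex.normSq (inp φ (ψ j)) :=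
      Finset.sum_congr rfl fun j _ => Complex.sq_norm _
    rw [this]; linarith
  have hmain := key_amgm M N hNpos n hN a ha hle
  calc ∏ j, ‖inp φ (ψ j)‖ ^ (2 * n j) = ∏ j, a j ^ n j := by
        apply Finset.prod_congr rfl; intro j _
        rw [ha_def, pow_mul]
    _ ≤ ∏ j, ((n j : ℝ) / N) ^ n j := hmain
    _ = ∏ j, (f j) ^ (n j) := by
        apply Finset.prod_congr rfl; intro j _; rw [hf j]
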